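/- There exist constants C and x₀ such that for all x ≥ x₀, the number of ordered pairs (m, n) of positive integers with m·n ≤ x and rad(m) = rad(n) is at most x^{1/2} · exp( (2·(2 log x)^{1/2} / log log x) · (1 + C/ log log x) ). -/

import Mathlib

open Finset

/-- The radical of a natural number: the product of its distinct prime divisors. -/
def rad (n : ℕ) : ℕ := ∏ p ∈ n.primeFactors, p

lemma radeq {m n : ℕ} (h : rad m = rad n) : m.primeFactors = n.primeFactors := by
  have h1 : (rad m).primeFactors = m.primeFactors :=
    Nat.primeFactors_prod (fun p hp => Nat.prime_of_mem_primeFactors hp)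
  have h2 : (rad n).primeFactors = n.primeFactors :=
    Nat.primeFactors_prod (fun p hp => Nat.prime_of_mem_primeFactors hp)
  rw [← h1, ← h2, h]

lemma harmonic_bound : ∀ K : ℕ, (∑ k ∈ Finset.range (K+1), (1:ℝ)/(k+1)) ≤ 1 + Real.log (K+1) := by
  intro K
  induction K with
  | zero => simp
  | succ K ih =>
    rw [Finset.sum_range_succ]
    have key : (1:ℝ)/(K+1+1) ≤ Real.log (K+1+1) - Real.log (K+1) := by
      have hpos : (0:ℝ) < (K:ℝ)+1 := by positivity
      have hpos2 : (0:ℝ) < (K:ℝ)+1+1 := by positivity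
      have h := Real.log_le_sub_one_of_pos (show (0:ℝ) < ((K:ℝ)+1)/((K:ℝ)+1+1) by positivity)
      rw [Real.log_div (by positivity) (by positivity)] at h
      have : ((K:ℝ)+1)/((K:ℝ)+1+1) - 1 = -(1/((K:ℝ)+1+1)) := by field_simp; ring
      rw [this] at h
      linarith
    push_cast
    push_cast at ih
    linarith

lemma block_card (k : ℕ) :
    ((Finset.Ioc (2^k) (2^(k+1))).filter Nat.Prime).card * (k+1) ≤ 2^(k+3) := by
  set s := (Finset.Ioc (2^k) (2^(k+1))).filter Nat.Prime with hs
  have hcard1 : s.card ≤ 2^k := by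
    calc s.card ≤ (Finset.Ioc (2^k) (2^(k+1))).card := Finset.card_filter_le _ _
    _ = 2^(k+1) - 2^k := by rw [Nat.card_Ioc]
    _ ≤ 2^k := by rw [pow_succ]; omega
  have hmul : s.card * k ≤ 2^(k+2) := by
    have hprod1 : (2^k)^s.card ≤ ∏ p ∈ s, p := by
      apply Finset.pow_card_le_prod
      intro p hp
      rw [hs, Finset.mem_filter, Finset.mem_Ioc] at hp
      omega
    have hprod2 : (∏ p ∈ s, p) ≤ primorial (2^(k+1)) := by
      apply Finset.prod_le_prod_of_subset_of_one_le'
      · intro p hp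
        rw [hs, Finset.mem_filter, Finset.mem_Ioc] at hp
        simp only [primorial, Finset.mem_filter, Finset.mem_range]
        exact ⟨by omega, hp.2⟩
      · intro p hp _
        simp only [primorial, Finset.mem_filter] at hp
        exact hp.2.one_lt.le
    have hprim : primorial (2^(k+1)) ≤ 4^(2^(k+1)) := primorial_le_4_pow _
    have h4 : (4:ℕ)^(2^(k+1)) = 2^(2^(k+2)) := by
      rw [show (4:ℕ) = 2^2 by norm_num, ← pow_mul, pow_succ 2 (k+1)]
      ring_nf
    have hfin : (2:ℕ)^(k * s.card) ≤ 2^(2^(k+2)) := by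
      rw [pow_mul]
      calc (2^k)^s.card ≤ ∏ p ∈ s, p := hprod1
        _ ≤ 4^(2^(k+1)) := hprod2.trans hprim
        _ = 2^(2^(k+2)) := h4
    have := (Nat.pow_le_pow_iff_right (by norm_num : 1 < 2)).mp hfin
    calc s.card * k = k * s.card := by ring
      _ ≤ 2^(k+2) := this
  calc s.card * (k+1) = s.card * k + s.card := by ring
    _ ≤ 2^(k+2) + 2^k := by omega
    _ ≤ 2^(k+3) := by
        have h1 : (2:ℕ)^k ≤ 2^(k+2) := Nat.pow_le_pow_right (by norm_num) (by omega)
        have h2 : (2:ℕ)^(k+3) = 2^(k+2)*2 := by ring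
        omega

lemma block_sum (k : ℕ) :
    ∑ p ∈ (Finset.Ioc (2^k) (2^(k+1))).filter Nat.Prime, (1:ℝ)/p ≤ 8/(k+1) := by
  set s := (Finset.Ioc (2^k) (2^(k+1))).filter Nat.Prime with hs
  have h1 : ∑ p ∈ s, (1:ℝ)/p ≤ s.card * ((2:ℝ)^k)⁻¹ := by
    calc ∑ p ∈ s, (1:ℝ)/p ≤ ∑ _p ∈ s, ((2:ℝ)^k)⁻¹ := by
          apply Finset.sum_le_sum
          intro p hp
          rw [hs, Finset.mem_filter, Finset.mem_Ioc] at hp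
          rw [one_div]
          apply inv_anti₀ (by positivity)
          exact_mod_cast (le_of_lt hp.1.1)
      _ = s.card * ((2:ℝ)^k)⁻¹ := by rw [Finset.sum_const, nsmul_eq_mul]
  have h2 : (s.card : ℝ) ≤ (2:ℝ)^(k+3) / (k+1) := by
    have := block_card k
    have hc : (s.card : ℝ) * (k+1) ≤ 2^(k+3) := by exact_mod_cast this
    rw [le_div_iff₀ (by positivity)]
    exact hc
  calc ∑ p ∈ s, (1:ℝ)/p ≤ s.card * ((2:ℝ)^k)⁻¹ := h1
    _ ≤ ((2:ℝ)^(k+3) / (k+1)) * ((2:ℝ)^k)⁻¹ := by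
        apply mul_le_mul_of_nonneg_right h2 (by positivity)
    _ = 8/(k+1) := by
        rw [pow_add]
        field_simp
        ring

lemma prime_sum_Ioc (K : ℕ) :
    ∑ p ∈ (Finset.Ioc 1 (2^K)).filter Nat.Prime, (1:ℝ)/p ≤ ∑ k ∈ Finset.range K, (8:ℝ)/(k+1) := by
  induction K with
  | zero => simp
  | succ K ih =>
    have hsplit : Finset.Ioc 1 (2^(K+1)) = Finset.Ioc 1 (2^K) ∪ Finset.Ioc (2^K) (2^(K+1)) := by
      rw [Finset.Ioc_union_Ioc_eq_Ioc]
      · exact Nat.one_le_two_pow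
      · exact Nat.pow_le_pow_right (by norm_num) (by omega)
    have hdisj : Disjoint ((Finset.Ioc 1 (2^K)).filter Nat.Prime)
        ((Finset.Ioc (2^K) (2^(K+1))).filter Nat.Prime) := by
      rw [Finset.disjoint_left]
      intro a ha hb
      rw [Finset.mem_filter, Finset.mem_Ioc] at ha hb
      omega
    rw [hsplit, Finset.filter_union, Finset.sum_union hdisj, Finset.sum_range_succ]
    exact add_le_add ih (block_sum K)

lemma prime_recip_bound {N : ℕ} (hN : 3 ≤ N) :
    ∑ p ∈ (Finset.range (N+1)).filter Nat.Prime, (1:ℝ)/p ≤ 16 + 8 * Real.log (Real.log N) := by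
  set K := Nat.log 2 N + 1 with hK
  have hNK : N < 2^K := Nat.lt_pow_succ_log_self (by norm_num) N
  have hsub : (Finset.range (N+1)).filter Nat.Prime ⊆ (Finset.Ioc 1 (2^K)).filter Nat.Prime := by
    intro p hp
    rw [Finset.mem_filter, Finset.mem_range] at hp
    rw [Finset.mem_filter, Finset.mem_Ioc]
    exact ⟨⟨hp.2.one_lt, by omega⟩, hp.2⟩
  have h1 : ∑ p ∈ (Finset.range (N+1)).filter Nat.Prime, (1:ℝ)/p
      ≤ ∑ p ∈ (Finset.Ioc 1 (2^K)).filter Nat.Prime, (1:ℝ)/p := by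
    apply Finset.sum_le_sum_of_subset_of_nonneg hsub
    intro p _ _
    positivity
  have h2 := prime_sum_Ioc K
  have h3 : ∑ k ∈ Finset.range K, (8:ℝ)/(k+1) = 8 * ∑ k ∈ Finset.range K, (1:ℝ)/(k+1) := by
    rw [Finset.mul_sum]
    apply Finset.sum_congr rfl
    intro k _
    ring
  have h4 : ∑ k ∈ Finset.range K, (1:ℝ)/(k+1) ≤ 1 + Real.log K := by
    have := harmonic_bound (Nat.log 2 N)
    rw [hK]
    push_cast
    push_cast at this
    convert this using 3 <;> norm_num
  -- bound log K ≤ 1 + log (log N)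
  have hlogN1 : (1:ℝ) ≤ Real.log N := by
    have h3N : (3:ℝ) ≤ (N:ℝ) := by exact_mod_cast hN
    have : Real.exp 1 ≤ 3 := by
      have := Real.exp_one_lt_d9
      linarith
    calc (1:ℝ) = Real.log (Real.exp 1) := by rw [Real.log_exp]
      _ ≤ Real.log N := Real.log_le_log (Real.exp_pos 1) (this.trans h3N)
  have hKle : (K:ℝ) ≤ 2.6 * Real.log N := by
    have hlog2 : (Nat.log 2 N : ℝ) * Real.log 2 ≤ Real.log N := by
      have hpow : (2:ℕ)^(Nat.log 2 N) ≤ N := Nat.pow_log_le_self 2 (by omega)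
      have hpowR : ((2:ℝ))^(Nat.log 2 N) ≤ (N:ℝ) := by exact_mod_cast hpow
      calc (Nat.log 2 N : ℝ) * Real.log 2 = Real.log ((2:ℝ)^(Nat.log 2 N)) := by
            rw [Real.log_pow]
        _ ≤ Real.log N := Real.log_le_log (by positivity) hpowR
    have hl2 : (0.666:ℝ) ≤ Real.log 2 := by
      have := Real.log_two_gt_d9
      linarith
    have hNlog : (Nat.log 2 N : ℝ) ≤ 1.6 * Real.log N := by
      nlinarith [(Nat.cast_nonneg (Nat.log 2 N) : (0:ℝ) ≤ (Nat.log 2 N : ℝ))]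
    rw [hK]
    push_cast
    linarith
  have hlogK : Real.log K ≤ 1 + Real.log (Real.log N) := by
    have hKpos : (0:ℝ) < K := by positivity
    calc Real.log K ≤ Real.log (2.6 * Real.log N) := Real.log_le_log hKpos hKle
      _ = Real.log 2.6 + Real.log (Real.log N) := by
          rw [Real.log_mul (by norm_num) (by linarith)]
      _ ≤ 1 + Real.log (Real.log N) := by
          have : Real.log 2.6 ≤ 1 := by
            rw [show (1:ℝ) = Real.log (Real.exp 1) by rw [Real.log_exp]]
            apply Real.log_le_log (by norm_num)
            have := Real.exp_one_gt_d9
            linarith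
          linarith
  calc ∑ p ∈ (Finset.range (N+1)).filter Nat.Prime, (1:ℝ)/p
      ≤ ∑ k ∈ Finset.range K, (8:ℝ)/(k+1) := h1.trans h2
    _ = 8 * ∑ k ∈ Finset.range K, (1:ℝ)/(k+1) := h3
    _ ≤ 8 * (1 + Real.log K) := by linarith [h4]
    _ ≤ 16 + 8 * Real.log (Real.log N) := by linarith [hlogK]

set_option maxHeartbeats 1000000 in
lemma count_bound {x : ℝ} (hx : 3 ≤ x) :
    ((((Finset.Icc 1 ⌊x⌋₊ ×ˢ Finset.Icc 1 ⌊x⌋₊).filter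
        (fun mn : ℕ × ℕ => (mn.1 * mn.2 : ℝ) ≤ x ∧ rad mn.1 = rad mn.2)).card : ℝ))
      ≤ x ^ ((1:ℝ)/2) * Real.exp (256 + 128 * Real.log (Real.log x)) := by
  classical
  have hx0 : (0:ℝ) < x := by linarith
  set X := ⌊x⌋₊ with hXdef
  have hX3 : 3 ≤ X := Nat.le_floor (by exact_mod_cast hx)
  have hXx : (X:ℝ) ≤ x := Nat.floor_le hx0.le
  set P := (Finset.range (X+1)).filter Nat.Prime with hP
  set t0 : Finset (ℕ×ℕ) := insert (0,0) (Finset.Icc 1 X ×ˢ Finset.Icc 1 X) with ht0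
  set w : ℕ → ℕ×ℕ → ℝ := fun p ef => ((p ^ ef.1 * p ^ ef.2 : ℕ) : ℝ) ^ (-(1/2) : ℝ) with hw
  set S := (Finset.Icc 1 X ×ˢ Finset.Icc 1 X).filter
      (fun mn : ℕ × ℕ => (mn.1 * mn.2 : ℝ) ≤ x ∧ rad mn.1 = rad mn.2) with hSdef
  have hmemS : ∀ mn : ℕ × ℕ, mn ∈ S →
      (1 ≤ mn.1 ∧ mn.1 ≤ X) ∧ (1 ≤ mn.2 ∧ mn.2 ≤ X) ∧ ((mn.1 * mn.2 : ℝ) ≤ x)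
        ∧ rad mn.1 = rad mn.2 := by
    intro mn hmn
    rw [hSdef, Finset.mem_filter, Finset.mem_product, Finset.mem_Icc, Finset.mem_Icc] at hmn
    exact ⟨hmn.1.1, hmn.1.2, hmn.2.1, hmn.2.2⟩
  -- Step A
  have stepA : (S.card : ℝ) ≤ x ^ ((1:ℝ)/2) *
      ∑ mn ∈ S, ((mn.1 * mn.2 : ℕ) : ℝ) ^ (-(1/2) : ℝ) := by
    rw [Finset.mul_sum, Finset.card_eq_sum_ones]
    push_cast
    apply Finset.sum_le_sum
    intro mn hmn
    obtain ⟨⟨hm1, hmX⟩, ⟨hn1, hnX⟩, hle, _⟩ := hmemS mn hmn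
    have ht_pos : (0:ℝ) < ((mn.1 * mn.2 : ℕ) : ℝ) := by
      have : 1 ≤ mn.1 * mn.2 := Nat.one_le_iff_ne_zero.mpr (by positivity)
      exact_mod_cast Nat.lt_of_lt_of_le Nat.zero_lt_one this
    have htx : ((mn.1 * mn.2 : ℕ) : ℝ) ≤ x := by push_cast; push_cast at hle; linarith
    have key : x ^ ((1:ℝ)/2) * ((mn.1 * mn.2 : ℕ) : ℝ) ^ (-(1/2) : ℝ)
        = (x / ((mn.1 * mn.2 : ℕ) : ℝ)) ^ ((1:ℝ)/2) := by
      rw [Real.rpow_neg ht_pos.le, Real.div_rpow hx0.le ht_pos.le]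
      rfl
    push_cast at key
    rw [key]
    have h1 : (1:ℝ) ≤ x / ((mn.1 * mn.2 : ℕ) : ℝ) := (one_le_div ht_pos).mpr htx
    push_cast at h1
    calc (1:ℝ) = (1:ℝ) ^ ((1:ℝ)/2) := (Real.one_rpow _).symm
      _ ≤ (x / ((mn.1:ℝ) * (mn.2:ℝ))) ^ ((1:ℝ)/2) :=
          Real.rpow_le_rpow (by norm_num) h1 (by norm_num)
  -- factorization reconstruction
  have hfact : ∀ m : ℕ, m ≠ 0 → m ≤ X → (∏ p ∈ P, p ^ m.factorization p) = m := by
    intro m hm hmX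
    have hsub : m.primeFactors ⊆ P := by
      intro p hp
      rw [hP, Finset.mem_filter, Finset.mem_range]
      have := Nat.le_of_mem_primeFactors hp
      exact ⟨by omega, Nat.prime_of_mem_primeFactors hp⟩
    have h1 : (∏ p ∈ P, p ^ m.factorization p)
        = ∏ p ∈ m.primeFactors, p ^ m.factorization p := by
      apply (Finset.prod_subset hsub _).symm
      intro p _ hnp
      have : m.factorization p = 0 := by
        have := (Finsupp.notMem_support_iff).mp (by rwa [Nat.support_factorization])
        exact this
      rw [this, pow_zero]
    rw [h1]
    have h2 := Nat.factorization_prod_pow_eq_self hm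
    rw [Finsupp.prod, Nat.support_factorization] at h2
    exact h2
  -- Step B
  have stepB : (∑ mn ∈ S, ((mn.1 * mn.2 : ℕ) : ℝ) ^ (-(1/2) : ℝ))
      ≤ ∏ p ∈ P, ∑ ef ∈ t0, w p ef := by
    set Φ : ℕ × ℕ → ((a : ℕ) → a ∈ P → ℕ × ℕ) :=
      fun mn a _ => (mn.1.factorization a, mn.2.factorization a) with hΦ
    set F : ((a : ℕ) → a ∈ P → ℕ × ℕ) → ℝ :=
      fun g => ∏ p ∈ P.attach, w p.1 (g p.1 p.2) with hF
    have hval : ∀ mn ∈ S, ((mn.1 * mn.2 : ℕ) : ℝ) ^ (-(1/2) : ℝ) = F (Φ mn) := by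
      intro mn hmn
      obtain ⟨⟨hm1, hmX⟩, ⟨hn1, hnX⟩, _, _⟩ := hmemS mn hmn
      have h1 : F (Φ mn) = ∏ p ∈ P,
          ((p ^ mn.1.factorization p * p ^ mn.2.factorization p : ℕ) : ℝ) ^ (-(1/2) : ℝ) :=
        Finset.prod_attach P
          (fun p => ((p ^ mn.1.factorization p * p ^ mn.2.factorization p : ℕ) : ℝ) ^ (-(1/2) : ℝ))
      rw [h1, Real.finset_prod_rpow _ _ (fun p _ => by positivity)]
      congr 1
      rw [← Nat.cast_prod]
      congr 1
      rw [Finset.prod_mul_distrib, hfact mn.1 (by omega) hmX, hfact mn.2 (by omega) hnX]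
    have himg : ∀ mn ∈ S, Φ mn ∈ P.pi (fun _ => t0) := by
      intro mn hmn
      obtain ⟨⟨hm1, hmX⟩, ⟨hn1, hnX⟩, _, hrad⟩ := hmemS mn hmn
      rw [Finset.mem_pi]
      intro p hp
      have hpf : mn.1.primeFactors = mn.2.primeFactors := radeq hrad
      by_cases h0 : mn.1.factorization p = 0
      · have h0' : mn.2.factorization p = 0 := by
          by_contra hne
          have h2 : p ∈ mn.2.primeFactors := by
            rw [← Nat.support_factorization, Finsupp.mem_support_iff]; exact hne
          rw [← hpf, ← Nat.support_factorization, Finsupp.mem_support_iff] at h2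
          exact h2 h0
        have : Φ mn p hp = (0, 0) := by rw [hΦ]; simp [h0, h0']
        rw [this, ht0]
        exact Finset.mem_insert_self _ _
      · have h2 : p ∈ mn.1.primeFactors := by
          rw [← Nat.support_factorization, Finsupp.mem_support_iff]; exact h0
        have h0' : mn.2.factorization p ≠ 0 := by
          rw [hpf] at h2
          rw [← Nat.support_factorization, Finsupp.mem_support_iff] at h2
          exact h2
        rw [ht0]
        apply Finset.mem_insert_of_mem
        have hred : Φ mn p hp = (mn.1.factorization p, mn.2.factorization p) := rfl
        rw [hred, Finset.mem_product, Finset.mem_Icc, Finset.mem_Icc]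
        constructor
        · exact ⟨by omega, le_trans (Nat.factorization_lt p (by omega)).le hmX⟩
        · exact ⟨by omega, le_trans (Nat.factorization_lt p (by omega)).le hnX⟩
    have hinj : ∀ mn ∈ S, ∀ mn' ∈ S, Φ mn = Φ mn' → mn = mn' := by
      intro mn hmn mn' hmn' heq
      obtain ⟨⟨hm1, hmX⟩, ⟨hn1, hnX⟩, _, _⟩ := hmemS mn hmn
      obtain ⟨⟨hm1', hmX'⟩, ⟨hn1', hnX'⟩, _, _⟩ := hmemS mn' hmn'
      have hcomp : ∀ p ∈ P, mn.1.factorization p = mn'.1.factorization p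
          ∧ mn.2.factorization p = mn'.2.factorization p := by
        intro p hp
        have := congrFun (congrFun heq p) hp
        rw [hΦ] at this
        exact ⟨congrArg Prod.fst this, congrArg Prod.snd this⟩
      have e1 : mn.1 = mn'.1 := by
        rw [← hfact mn.1 (by omega) hmX, ← hfact mn'.1 (by omega) hmX']
        exact Finset.prod_congr rfl (fun p hp => by rw [(hcomp p hp).1])
      have e2 : mn.2 = mn'.2 := by
        rw [← hfact mn.2 (by omega) hnX, ← hfact mn'.2 (by omega) hnX']
        exact Finset.prod_congr rfl (fun p hp => by rw [(hcomp p hp).2])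
      exact Prod.ext e1 e2
    calc ∑ mn ∈ S, ((mn.1 * mn.2 : ℕ) : ℝ) ^ (-(1/2) : ℝ)
        = ∑ mn ∈ S, F (Φ mn) := Finset.sum_congr rfl hval
      _ = ∑ g ∈ S.image Φ, F g := (Finset.sum_image hinj).symm
      _ ≤ ∑ g ∈ P.pi (fun _ => t0), F g := by
          apply Finset.sum_le_sum_of_subset_of_nonneg
          · intro g hg
            rw [Finset.mem_image] at hg
            obtain ⟨mn, hmn, rfl⟩ := hg
            exact himg mn hmn
          · intro g _ _
            apply Finset.prod_nonneg
            intro p _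
            rw [hw]
            positivity
      _ = ∏ p ∈ P, ∑ ef ∈ t0, w p ef := (Finset.prod_sum P (fun _ => t0) w).symm
  -- Step C : each factor is at most 1 + 16/p
  have stepC : ∀ p ∈ P, (∑ ef ∈ t0, w p ef) ≤ 1 + 16 / (p:ℝ) := by
    intro p hp
    rw [hP, Finset.mem_filter] at hp
    have hp2 : 2 ≤ p := hp.2.two_le
    have hp2R : (2:ℝ) ≤ (p:ℝ) := by exact_mod_cast hp2
    have hppos : (0:ℝ) < (p:ℝ) := by linarith
    set q : ℝ := (p:ℝ) ^ (-(1/2) : ℝ) with hq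
    have hqpos : 0 < q := Real.rpow_pos_of_pos hppos _
    have hqle : q ≤ 0.72 := by
      have h14 : (1.4:ℝ) ≤ (p:ℝ) ^ ((1/2) : ℝ) := by
        have h2p : (2:ℝ) ^ ((1/2):ℝ) ≤ (p:ℝ) ^ ((1/2):ℝ) :=
          Real.rpow_le_rpow (by norm_num) hp2R (by norm_num)
        have hsqrt2 : (1.4:ℝ) ≤ (2:ℝ) ^ ((1/2):ℝ) := by
          rw [← Real.sqrt_eq_rpow]
          rw [show (1.4:ℝ) = Real.sqrt (1.4^2) by
            rw [Real.sqrt_sq (by norm_num)]]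
          exact Real.sqrt_le_sqrt (by norm_num)
        linarith
      have : q = ((p:ℝ) ^ ((1/2):ℝ))⁻¹ := by
        rw [hq, ← Real.rpow_neg hppos.le]
      rw [this]
      rw [inv_le_comm₀ (by linarith) (by norm_num)]
      linarith [h14]
    have hqlt1 : q < 1 := by linarith
    -- geometric sum bound
    have hginsert : Finset.range (X+1) = insert 0 (Finset.Icc 1 X) := by
      ext e
      simp only [Finset.mem_range, Finset.mem_insert, Finset.mem_Icc]
      omega
    have hgeom : (∑ e ∈ Finset.Icc 1 X, q ^ e) ≤ q / (1 - q) := by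
      have hsum : (∑ e ∈ Finset.range (X+1), q ^ e) = (∑ e ∈ Finset.Icc 1 X, q ^ e) + 1 := by
        rw [hginsert, Finset.sum_insert (by simp)]
        rw [pow_zero]
        ring
      have hle : (∑ e ∈ Finset.range (X+1), q ^ e) ≤ 1 / (1 - q) := by
        rw [geom_sum_eq (ne_of_lt hqlt1)]
        have hrw : (q^(X+1) - 1)/(q - 1) = (1 - q^(X+1))/(1 - q) := by
          rw [← neg_div_neg_eq]
          ring_nf
        rw [hrw, div_le_div_iff₀ (by linarith) (by linarith)]
        have hqpow : 0 ≤ q ^ (X+1) := by positivity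
        nlinarith
      have heq2 : (1:ℝ)/(1-q) - 1 = q/(1-q) := by
        rw [div_sub' (by linarith : (1:ℝ)-q ≠ 0)]
        ring_nf
      linarith
    -- expand the sum over t0
    have hsum_t0 : (∑ ef ∈ t0, w p ef) = 1 + (∑ e ∈ Finset.Icc 1 X, q ^ e) ^ 2 := by
      rw [ht0, Finset.sum_insert (by simp)]
      have h00 : w p (0,0) = 1 := by
        rw [hw]
        norm_num
      rw [h00]
      congr 1
      have hsplit : ∀ ef : ℕ × ℕ, w p ef = q ^ ef.1 * q ^ ef.2 := by
        intro ef
        rw [hw]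
        have hqe : ∀ e : ℕ, q ^ e = ((p:ℝ) ^ e) ^ (-(1/2) : ℝ) := by
          intro e
          rw [hq, ← Real.rpow_natCast ((p:ℝ) ^ (-(1/2):ℝ)) e, ← Real.rpow_mul hppos.le,
            mul_comm, Real.rpow_mul hppos.le, Real.rpow_natCast]
        rw [hqe, hqe]
        push_cast
        rw [← Real.mul_rpow (by positivity) (by positivity)]
      rw [sq, Finset.sum_mul_sum]
      rw [Finset.sum_product]
      apply Finset.sum_congr rfl
      intro e _
      apply Finset.sum_congr rfl
      intro f _
      exact hsplit (e, f)
    rw [hsum_t0]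
    have hG0 : 0 ≤ (∑ e ∈ Finset.Icc 1 X, q ^ e) := by positivity
    have hGle : (∑ e ∈ Finset.Icc 1 X, q ^ e) ≤ 4 * q := by
      have h1q : (0.28:ℝ) ≤ 1 - q := by linarith
      calc (∑ e ∈ Finset.Icc 1 X, q ^ e) ≤ q / (1 - q) := hgeom
        _ ≤ 4 * q := by
            rw [div_le_iff₀ (by linarith)]
            nlinarith
    have hq2 : q * q = ((p:ℝ))⁻¹ := by
      rw [hq, ← Real.rpow_add hppos]
      norm_num
      exact (Real.rpow_neg_one _)
    have hsq : (∑ e ∈ Finset.Icc 1 X, q ^ e) ^ 2 ≤ 16 / (p:ℝ) := by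
      calc (∑ e ∈ Finset.Icc 1 X, q ^ e) ^ 2 ≤ (4*q)^2 := by
            apply pow_le_pow_left₀ hG0 hGle
        _ = 16 * (q*q) := by ring
        _ = 16 / (p:ℝ) := by rw [hq2]; ring
    linarith
  -- Step D : product bound
  have prodnn : ∀ p ∈ P, 0 ≤ ∑ ef ∈ t0, w p ef := by
    intro p _
    apply Finset.sum_nonneg
    intro ef _
    rw [hw]
    positivity
  have stepD : (∏ p ∈ P, ∑ ef ∈ t0, w p ef) ≤ Real.exp (256 + 128 * Real.log (Real.log x)) := by
    have h1 : (∏ p ∈ P, ∑ ef ∈ t0, w p ef) ≤ ∏ p ∈ P, Real.exp (16 / (p:ℝ)) := by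
      apply Finset.prod_le_prod prodnn
      intro p hp
      calc (∑ ef ∈ t0, w p ef) ≤ 1 + 16/(p:ℝ) := stepC p hp
        _ ≤ Real.exp (16/(p:ℝ)) := by
            have := Real.add_one_le_exp (16/(p:ℝ))
            linarith
    have h2 : (∏ p ∈ P, Real.exp (16 / (p:ℝ))) = Real.exp (∑ p ∈ P, 16 / (p:ℝ)) :=
      (Real.exp_sum P _).symm
    have h3 : (∑ p ∈ P, 16 / (p:ℝ)) ≤ 256 + 128 * Real.log (Real.log x) := by
      have hX1 : (1:ℝ) < (X:ℝ) := by exact_mod_cast (by omega : 1 < X)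
      have hlogX : 0 < Real.log X := Real.log_pos hX1
      have hloglog : Real.log (Real.log (X:ℝ)) ≤ Real.log (Real.log x) := by
        apply Real.log_le_log hlogX
        apply Real.log_le_log (by linarith) hXx
      have hps := prime_recip_bound hX3
      have : (∑ p ∈ P, 16 / (p:ℝ)) = 16 * ∑ p ∈ P, (1:ℝ)/(p:ℝ) := by
        rw [Finset.mul_sum]
        apply Finset.sum_congr rfl
        intro p _
        ring
      rw [this, hP]
      linarith [hps, hloglog]
    calc (∏ p ∈ P, ∑ ef ∈ t0, w p ef) ≤ Real.exp (∑ p ∈ P, 16 / (p:ℝ)) := by rw [← h2]; exact h1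
      _ ≤ Real.exp (256 + 128 * Real.log (Real.log x)) := Real.exp_le_exp.mpr h3
  calc (S.card : ℝ) ≤ x ^ ((1:ℝ)/2) * ∑ mn ∈ S, ((mn.1 * mn.2 : ℕ) : ℝ) ^ (-(1/2) : ℝ) := stepA
    _ ≤ x ^ ((1:ℝ)/2) * (∏ p ∈ P, ∑ ef ∈ t0, w p ef) := by
        apply mul_le_mul_of_nonneg_left stepB (Real.rpow_nonneg hx0.le _)
    _ ≤ x ^ ((1:ℝ)/2) * Real.exp (256 + 128 * Real.log (Real.log x)) := by
        apply mul_le_mul_of_nonneg_left stepD (Real.rpow_nonneg hx0.le _)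

theorem equal_radical_pairs_bound :
    ∃ C : ℝ, ∃ x₀ : ℝ, ∀ x : ℝ, x₀ ≤ x →
      ((((Finset.Icc 1 ⌊x⌋₊ ×ˢ Finset.Icc 1 ⌊x⌋₊).filter
        (fun mn : ℕ × ℕ => (mn.1 * mn.2 : ℝ) ≤ x ∧ rad mn.1 = rad mn.2)).card : ℝ))
        ≤ x ^ ((1 : ℝ) / 2) *
          Real.exp ((2 * (2 * Real.log x) ^ ((1 : ℝ) / 2) / Real.log (Real.log x)) *
            (1 + C / Real.log (Real.log x))) := by
  refine ⟨0, Real.exp (Real.exp 256), fun x hx => ?_⟩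
  have hee : (3:ℝ) ≤ Real.exp (Real.exp 256) := by
    have h1 : (2:ℝ) ≤ Real.exp 256 := by
      have := Real.add_one_le_exp (256:ℝ)
      linarith
    calc (3:ℝ) ≤ Real.exp 2 := by
          have := Real.add_one_le_exp (2:ℝ)
          linarith
      _ ≤ Real.exp (Real.exp 256) := Real.exp_le_exp.mpr h1
  have hx3 : (3:ℝ) ≤ x := le_trans hee hx
  have hx0 : (0:ℝ) < x := by linarith
  set u := Real.log x with hu
  have hu_ge : Real.exp 256 ≤ u := by
    calc Real.exp 256 = Real.log (Real.exp (Real.exp 256)) := (Real.log_exp _).symm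
      _ ≤ Real.log x := Real.log_le_log (Real.exp_pos _) hx
  have hu_pos : 0 < u := lt_of_lt_of_le (Real.exp_pos _) hu_ge
  set l := Real.log u with hl
  have hl_ge : (256:ℝ) ≤ l := by
    calc (256:ℝ) = Real.log (Real.exp 256) := (Real.log_exp _).symm
      _ ≤ Real.log u := Real.log_le_log (Real.exp_pos _) hu_ge
  have hl_pos : 0 < l := by linarith
  -- key numeric comparison : 256 + 128 * l ≤ 2 * (2*u)^(1/2) / l
  have hkey : 256 + 128 * l ≤ 2 * (2*u) ^ ((1:ℝ)/2) / l := by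
    rw [le_div_iff₀ hl_pos]
    -- l ≤ 8 * u^(1/8)
    have hlog8 : l ≤ 8 * u ^ ((1:ℝ)/8) := by
      have := Real.log_le_rpow_div hu_pos.le (by norm_num : (0:ℝ) < 1/8)
      rw [hl]
      calc Real.log u ≤ u ^ ((1:ℝ)/8) / (1/8) := this
        _ = 8 * u ^ ((1:ℝ)/8) := by ring
    have hu18 : (0:ℝ) ≤ u ^ ((1:ℝ)/8) := Real.rpow_nonneg hu_pos.le _
    have hl2 : l * l ≤ 64 * u ^ ((1:ℝ)/4) := by
      have h8 : u ^ ((1:ℝ)/8) * u ^ ((1:ℝ)/8) = u ^ ((1:ℝ)/4) := by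
        rw [← Real.rpow_add hu_pos]
        norm_num
      nlinarith
    -- u^(1/4) is large
    have hu14 : (4128:ℝ) ≤ u ^ ((1:ℝ)/4) := by
      have h1 : (Real.exp 256) ^ ((1:ℝ)/4) ≤ u ^ ((1:ℝ)/4) :=
        Real.rpow_le_rpow (Real.exp_pos _).le hu_ge (by norm_num)
      have h2 : (Real.exp 256) ^ ((1:ℝ)/4) = Real.exp 64 := by
        rw [← Real.exp_one_rpow (256:ℝ), ← Real.rpow_mul (Real.exp_pos 1).le]
        norm_num
      have h3 : (4128:ℝ) ≤ Real.exp 64 := by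
        have he2 : (2:ℝ) ≤ Real.exp 1 := by
          have := Real.exp_one_gt_d9
          linarith
        calc (4128:ℝ) ≤ 2^64 := by norm_num
          _ ≤ (Real.exp 1)^64 := by
              apply pow_le_pow_left₀ (by norm_num) he2
          _ = Real.exp 64 := by
              rw [← Real.exp_nat_mul]
              norm_num
      linarith [h2 ▸ h1]
    have hu12 : u ^ ((1:ℝ)/4) * u ^ ((1:ℝ)/4) = u ^ ((1:ℝ)/2) := by
      rw [← Real.rpow_add hu_pos]
      norm_num
    have hsqrt : u ^ ((1:ℝ)/2) ≤ (2*u) ^ ((1:ℝ)/2) :=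
      Real.rpow_le_rpow hu_pos.le (by linarith) (by norm_num)
    have hquarter : (0:ℝ) ≤ u ^ ((1:ℝ)/4) := Real.rpow_nonneg hu_pos.le _
    have hfinal : (256 + 128*l) * l ≤ 2 * u ^ ((1:ℝ)/2) := by
      have hbig : (256 + 128*l) * l ≤ 129 * (l*l) := by nlinarith
      have : 129 * (l*l) ≤ 129 * (64 * u ^ ((1:ℝ)/4)) := by linarith
      have hlast : 129 * 64 * u ^ ((1:ℝ)/4) ≤ 2 * (u ^ ((1:ℝ)/4) * u ^ ((1:ℝ)/4)) := by
        nlinarith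
      rw [hu12] at hlast
      linarith
    nlinarith [hsqrt]
  -- conclude
  have hcb := count_bound hx3
  have hrhs : Real.exp (256 + 128 * Real.log (Real.log x))
      ≤ Real.exp ((2 * (2 * Real.log x) ^ ((1 : ℝ) / 2) / Real.log (Real.log x)) *
          (1 + 0 / Real.log (Real.log x))) := by
    apply Real.exp_le_exp.mpr
    have : (1:ℝ) + 0 / Real.log (Real.log x) = 1 := by
      rw [zero_div, add_zero]
    rw [this, mul_one]
    exact hkey
  calc ((((Finset.Icc 1 ⌊x⌋₊ ×ˢ Finset.Icc 1 ⌊x⌋₊).filter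
        (fun mn : ℕ × ℕ => (mn.1 * mn.2 : ℝ) ≤ x ∧ rad mn.1 = rad mn.2)).card : ℝ))
      ≤ x ^ ((1:ℝ)/2) * Real.exp (256 + 128 * Real.log (Real.log x)) := hcb
    _ ≤ x ^ ((1 : ℝ) / 2) *
          Real.exp ((2 * (2 * Real.log x) ^ ((1 : ℝ) / 2) / Real.log (Real.log x)) *
            (1 + 0 / Real.log (Real.log x))) := by
        apply mul_le_mul_of_nonneg_left hrhs (Real.rpow_nonneg hx0.le _)
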